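/- Let G be a finite group acting transitively on a finite nonempty set X, let p be a prime, P a Sylow p-subgroup of G, and N = N_G(P). If p does not divide the cardinality of X, then there is exactly one N-orbit of X whose cardinality is coprime to p. -/

import Mathlib

open MulAction Subgroup

/-- If `G` acts transitively on `X` and `p ∤ |X|`, then there is exactly one orbit of
`N = N_G(P)` on `X` whose cardinality is coprime to `p`. -/
theorem existsUnique_norbit_coprime {p : ℕ} [Fact p.Prime] {G : Type*} [Group G] [Fintype G]
    {X : Type*} [Fintype X] [Nonempty X] [MulAction G X] [MulAction.IsPretransitive G X]
    (P : Sylow p G) (h : ¬ p ∣ Nat.card X) :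
    ∃! ω : MulAction.orbitRel.Quotient (Subgroup.normalizer ((P : Subgroup G) : Set G)) X,
      p.Coprime (Nat.card ω.orbit) := by
  classical
  have hp := Fact.out (p := p.Prime)
  set N := Subgroup.normalizer ((P : Subgroup G) : Set G) with hN
  have hPN : (P : Subgroup G) ≤ N := Subgroup.le_normalizer
  -- A: a point fixed by `P` lies in an `N`-orbit of cardinality coprime to `p`.
  have keyA : ∀ x : X, (P : Subgroup G) ≤ stabilizer G x →
      p.Coprime (Nat.card (orbitRel.Quotient.orbit
        (⟦x⟧ : orbitRel.Quotient N X))) := by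
    intro x hx
    have horb : (orbitRel.Quotient.orbit (⟦x⟧ : orbitRel.Quotient N X)) = orbit N x := by
      rw [← Quotient.mk''_eq_mk]
      exact orbitRel.Quotient.orbit_mk x
    have hcard : Nat.card (orbitRel.Quotient.orbit (⟦x⟧ : orbitRel.Quotient N X))
        = (stabilizer N x).index := by
      rw [horb, index_stabilizer, Nat.card_coe_set_eq]
    rw [hcard]
    have hle : ((P.subtype hPN : Sylow p N) : Subgroup N) ≤ stabilizer N x := by
      intro n hn
      have hnP : (↑n : G) ∈ (P : Subgroup G) := hn
      have := hx hnP
      exact MulAction.mem_stabilizer_iff.mpr (MulAction.mem_stabilizer_iff.mp this)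
    have hdvd : (stabilizer N x).index ∣ ((P.subtype hPN : Sylow p N) : Subgroup N).index :=
      Subgroup.index_dvd_of_le hle
    have hnd : ¬ p ∣ ((P.subtype hPN : Sylow p N) : Subgroup N).index :=
      (P.subtype hPN).not_dvd_index
    exact hp.coprime_iff_not_dvd.mpr fun hd => hnd (hd.trans hdvd)
  -- B: an `N`-orbit coprime to `p` contains a point fixed by `P`.
  have keyB : ∀ ω : orbitRel.Quotient N X, p.Coprime (Nat.card ω.orbit) →
      ∃ y : X, (⟦y⟧ : orbitRel.Quotient N X) = ω ∧ (P : Subgroup G) ≤ stabilizer G y := by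
    intro ω hω
    have hnd : ¬ p ∣ Nat.card ω.orbit := hp.coprime_iff_not_dvd.mp hω
    have hpg : IsPGroup p ((P.subtype hPN : Sylow p N) : Subgroup N) := (P.subtype hPN).2
    obtain ⟨y, hy⟩ := hpg.nonempty_fixed_point_of_prime_not_dvd_card ω.orbit hnd
    refine ⟨↑y, ?_, ?_⟩
    · rw [← Quotient.mk''_eq_mk]
      exact orbitRel.Quotient.mem_orbit.mp y.2
    · intro g hg
      have hgN : g ∈ N := hPN hg
      have hmem : (⟨g, hgN⟩ : N) ∈ ((P.subtype hPN : Sylow p N) : Subgroup N) := hg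
      have hfix := hy (⟨⟨g, hgN⟩, hmem⟩ : ((P.subtype hPN : Sylow p N) : Subgroup N))
      rw [MulAction.mem_stabilizer_iff]
      exact congrArg Subtype.val hfix
  -- C: two points fixed by `P` lie in the same `N`-orbit.
  have keyC : ∀ x y : X, (P : Subgroup G) ≤ stabilizer G x → (P : Subgroup G) ≤ stabilizer G y →
      (⟦x⟧ : orbitRel.Quotient N X) = ⟦y⟧ := by
    intro x y hx hy
    obtain ⟨g, hg⟩ := MulAction.exists_smul_eq G x y
    have h2 : ((g • P : Sylow p G) : Subgroup G) ≤ stabilizer G y := by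
      rw [Sylow.coe_subgroup_smul, Subgroup.pointwise_smul_def, ← hg,
        MulAction.stabilizer_smul_eq_stabilizer_map_conj]
      exact Subgroup.map_mono hx
    obtain ⟨k, hk⟩ := MulAction.exists_smul_eq (stabilizer G y) ((g • P).subtype h2)
      (P.subtype hy)
    simp_rw [Sylow.smul_subtype, Subgroup.smul_def, smul_smul] at hk
    have hmem : ↑k * g ∈ N := Sylow.smul_eq_iff_mem_normalizer.mp (Sylow.subtype_injective hk)
    have hsmul : (⟨↑k * g, hmem⟩ : N) • x = y := by
      show (↑k * g : G) • x = y
      rw [mul_smul, hg]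
      exact k.2
    rw [Quotient.eq]
    exact MulAction.mem_orbit_symm.mp ⟨⟨↑k * g, hmem⟩, hsmul⟩
  -- assemble
  obtain ⟨x₀, hx₀⟩ := P.2.nonempty_fixed_point_of_prime_not_dvd_card X h
  have hx₀' : (P : Subgroup G) ≤ stabilizer G x₀ := fun g hg =>
    MulAction.mem_stabilizer_iff.mpr (hx₀ ⟨g, hg⟩)
  refine ⟨(⟦x₀⟧ : orbitRel.Quotient N X), keyA x₀ hx₀', ?_⟩
  intro ω hω
  obtain ⟨y, hyω, hy⟩ := keyB ω hω
  rw [← hyω]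
  exact keyC y x₀ hy hx₀'
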